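/- The Blanuša functions satisfy ψ̂₁(u)² + ψ̂₂(u)² = 1 for every u ∈ ℝ. -/

import Mathlib

open scoped Classical

/-- The function `ξ` defined by `ξ(u) = sin(πu)·exp(−1/sin²(πu))` for `u ∉ ℤ`
and `ξ(u) = 0` for `u ∈ ℤ`. -/
noncomputable def xi (u : ℝ) : ℝ :=
  if ∃ m : ℤ, u = (m : ℝ) then 0
  else Real.sin (Real.pi * u) * Real.exp (-1 / (Real.sin (Real.pi * u)) ^ 2)

/-- `A = ∫₀¹ ξ(τ) dτ`. -/
noncomputable def A : ℝ := ∫ τ in (0 : ℝ)..1, xi τ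

/-- Blanuša's first function `ψ̂₁(u) = √((1/A)∫₀^{u+1} ξ(τ)dτ)`. -/
noncomputable def psihat1 (u : ℝ) : ℝ :=
  Real.sqrt ((1 / A) * ∫ τ in (0 : ℝ)..(u + 1), xi τ)

/-- Blanuša's second function `ψ̂₂(u) = √((1/A)∫₀^{u} ξ(τ)dτ)`. -/
noncomputable def psihat2 (u : ℝ) : ℝ :=
  Real.sqrt ((1 / A) * ∫ τ in (0 : ℝ)..u, xi τ)

section Aux
open MeasureTheory intervalIntegral

lemma xi_measurable : Measurable xi := by
  unfold xi
  refine Measurable.ite ?_ measurable_const ?_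
  · have : {u : ℝ | ∃ m : ℤ, u = (m : ℝ)} = Set.range (Int.cast : ℤ → ℝ) := by
      ext u; simp [eq_comm, Set.mem_range]
    rw [this]
    exact (Set.countable_range _).measurableSet
  · have h1 : Measurable fun u : ℝ => Real.sin (Real.pi * u) :=
      Real.continuous_sin.measurable.comp (measurable_const.mul measurable_id)
    exact h1.mul (Real.continuous_exp.measurable.comp
      (measurable_const.div (h1.pow_const 2)))

lemma xi_abs_le (u : ℝ) : ‖xi u‖ ≤ 1 := by
  unfold xi
  split
  · simp
  · rw [Real.norm_eq_abs, abs_mul]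
    have h1 : |Real.sin (Real.pi * u)| ≤ 1 := Real.abs_sin_le_one _
    have h2 : |Real.exp (-1 / Real.sin (Real.pi * u) ^ 2)| ≤ 1 := by
      rw [abs_of_pos (Real.exp_pos _)]
      rw [Real.exp_le_one_iff]
      apply div_nonpos_of_nonpos_of_nonneg <;> [norm_num; positivity]
    calc |Real.sin (Real.pi * u)| * |Real.exp (-1 / Real.sin (Real.pi * u) ^ 2)|
        ≤ 1 * 1 := mul_le_mul h1 h2 (abs_nonneg _) zero_le_one
      _ = 1 := by ring

lemma xi_int (a b : ℝ) : IntervalIntegrable xi volume a b := by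
  constructor <;>
  · apply MeasureTheory.Measure.integrableOn_of_bounded (M := 1)
    · exact (measure_Ioc_lt_top).ne
    · exact xi_measurable.aestronglyMeasurable
    · exact Filter.Eventually.of_forall xi_abs_le

lemma xi_add_one (u : ℝ) : xi (u + 1) = - xi u := by
  unfold xi
  have hc : (∃ m : ℤ, u + 1 = (m : ℝ)) ↔ (∃ m : ℤ, u = (m : ℝ)) := by
    constructor
    · rintro ⟨m, h⟩; exact ⟨m - 1, by push_cast; linarith⟩
    · rintro ⟨m, h⟩; exact ⟨m + 1, by push_cast; linarith⟩
  rw [if_congr hc rfl rfl]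
  split
  · simp
  · have hs : Real.sin (Real.pi * (u + 1)) = - Real.sin (Real.pi * u) := by
      rw [mul_add, mul_one, Real.sin_add_pi]
    rw [hs, neg_sq, neg_mul]

noncomputable def F (u : ℝ) : ℝ := ∫ τ in (0 : ℝ)..u, xi τ

lemma F_add_one (u : ℝ) : F (u + 1) = A - F u := by
  have h1 : (∫ τ in (0:ℝ)..1, xi τ) + (∫ τ in (1:ℝ)..(u+1), xi τ) = F (u + 1) :=
    integral_add_adjacent_intervals (xi_int 0 1) (xi_int 1 (u+1))
  have h2 : (∫ τ in (0:ℝ)..u, xi (τ + 1)) = ∫ τ in (1:ℝ)..(u+1), xi τ := by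
    rw [integral_comp_add_right]
    norm_num
  have h3 : (∫ τ in (0:ℝ)..u, xi (τ + 1)) = - F u := by
    simp_rw [xi_add_one]
    simp [F]
  rw [show F (u+1) = F (u+1) from rfl, ← h1, ← h2, h3, A]
  ring

lemma xi_pos_on (x : ℝ) (hx : x ∈ Set.Ioo (0:ℝ) 1) : 0 < xi x := by
  obtain ⟨h0, h1⟩ := hx
  unfold xi
  rw [if_neg]
  · have hs : 0 < Real.sin (Real.pi * x) :=
      Real.sin_pos_of_pos_of_lt_pi (by positivity)
        (by nlinarith [Real.pi_pos])
    positivity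
  · rintro ⟨m, rfl⟩
    rcases le_or_gt m 0 with h | h
    · exact absurd h0 (by exact_mod_cast not_lt.mpr (by exact_mod_cast h))
    · have : (1:ℤ) ≤ m := h
      exact absurd h1 (by exact_mod_cast not_lt.mpr (by exact_mod_cast this))

lemma xi_nonneg_on (x : ℝ) (hx : x ∈ Set.Icc (0:ℝ) 1) : 0 ≤ xi x := by
  obtain ⟨h0, h1⟩ := hx
  rcases eq_or_lt_of_le h0 with h | h
  · simp [xi, ← h]
  rcases eq_or_lt_of_le h1 with h' | h'
  · simp [xi, h']
  · exact (xi_pos_on x ⟨h, h'⟩).le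

lemma A_pos : 0 < A :=
  intervalIntegral_pos_of_pos_on (xi_int 0 1) xi_pos_on one_pos

lemma F_bounds_Icc (u : ℝ) (hu : u ∈ Set.Icc (0:ℝ) 1) : 0 ≤ F u ∧ F u ≤ A := by
  obtain ⟨h0, h1⟩ := hu
  constructor
  · exact integral_nonneg h0 (fun x hx => xi_nonneg_on x ⟨hx.1, le_trans hx.2 h1⟩)
  · have hadj : F u + (∫ τ in u..(1:ℝ), xi τ) = A :=
      integral_add_adjacent_intervals (xi_int 0 u) (xi_int u 1)
    have : 0 ≤ ∫ τ in u..(1:ℝ), xi τ :=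
      integral_nonneg h1 (fun x hx => xi_nonneg_on x ⟨le_trans h0 hx.1, hx.2⟩)
    linarith

lemma F_periodic : Function.Periodic F 2 := by
  intro u
  have h1 : F (u + 2) = A - F (u + 1) := by
    have := F_add_one (u + 1)
    rwa [show u + 1 + 1 = u + 2 by ring] at this
  rw [h1, F_add_one]; ring

lemma F_bounds (u : ℝ) : 0 ≤ F u ∧ F u ≤ A := by
  obtain ⟨y, hy, hFy⟩ := F_periodic.exists_mem_Ico₀ (by norm_num) u
  rw [hFy]
  obtain ⟨hy0, hy2⟩ := hy
  rcases le_or_gt y 1 with h | h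
  · exact F_bounds_Icc y ⟨hy0, h⟩
  · have heq : F y = A - F (y - 1) := by
      have := F_add_one (y - 1)
      rwa [show y - 1 + 1 = y by ring] at this
    have hb := F_bounds_Icc (y - 1) ⟨by linarith, by linarith⟩
    rw [heq]
    constructor <;> linarith [hb.1, hb.2]

end Aux

/-- The Blanuša functions satisfy `ψ̂₁(u)² + ψ̂₂(u)² = 1` for every `u ∈ ℝ`. -/
theorem psihat_sq_add_sq :
    ∀ u : ℝ, psihat1 u ^ 2 + psihat2 u ^ 2 = 1 := by
  intro u
  have hA : 0 < A := A_pos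
  obtain ⟨hF0, hFA⟩ := F_bounds u
  have h1 : psihat1 u ^ 2 = (1 / A) * (A - F u) := by
    unfold psihat1
    rw [show (∫ τ in (0:ℝ)..(u+1), xi τ) = F (u + 1) from rfl, F_add_one,
      Real.sq_sqrt (mul_nonneg (by positivity) (by linarith))]
  have h2 : psihat2 u ^ 2 = (1 / A) * F u := by
    unfold psihat2
    rw [show (∫ τ in (0:ℝ)..u, xi τ) = F u from rfl, Real.sq_sqrt (mul_nonneg (by positivity) hF0)]
  rw [h1, h2]
  field_simp
  ring
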